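/- arXiv:1503.06895 — 3 statements merged into one kernel-verified Lean document; each statement's English description precedes it below -/
import Mathlib

section
/- The map F is not Li-Yorke chaotic. -/
/-- `{x, y}` is a Li-Yorke chaotic pair for `T` if the distances between the iterates
`Tⁿ x` and `Tⁿ y` have positive limsup and zero liminf. -/
def LiYorkePair {X : Type*} [PseudoEMetricSpace X] (T : X → X) (x y : X) : Prop :=
  0 < Filter.limsup (fun n : ℕ => edist (T^[n] x) (T^[n] y)) Filter.atTop ∧
    Filter.liminf (fun n : ℕ => edist (T^[n] x) (T^[n] y)) Filter.atTop = 0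

/-- `T` is Li-Yorke chaotic if there is an uncountable set all of whose pairs of distinct
points are Li-Yorke chaotic pairs for `T`. -/
def LiYorkeChaotic {X : Type*} [PseudoEMetricSpace X] (T : X → X) : Prop :=
  ∃ Γ : Set X, ¬ Γ.Countable ∧ ∀ x ∈ Γ, ∀ y ∈ Γ, x ≠ y → LiYorkePair T x y

/-- The open unit disk in `ℂ`. -/
def unitDisk : Set ℂ := {z : ℂ | ‖z‖ < 1}

/-- The map `f` on the open unit disk. -/
noncomputable def mapF (z : ℂ) : ℂ :=
  if z = 0 then 0 else
    (Real.exp 1 * z / (Real.exp 1 * ‖z‖ - ‖z‖ + 1)) *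
      Complex.exp (2 * Real.pi * Complex.I *
        Real.log (‖z‖ / (1 - ‖z‖)))

/-- The map `F`, the inverse of `f`, on the open unit disk. -/
noncomputable def mapFinv (w : ℂ) : ℂ :=
  if w = 0 then 0 else
    ((Real.exp 1)⁻¹ * w / ((Real.exp 1)⁻¹ * ‖w‖ - ‖w‖ + 1)) *
      Complex.exp (-(2 * Real.pi * Complex.I *
        Real.log (‖w‖ / (1 - ‖w‖))))

open Filter

lemma denom_pos {r : ℝ} (h0 : 0 ≤ r) (h1 : r < 1) :
    0 < (Real.exp 1)⁻¹ * r - r + 1 := by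
  have he : 0 < (Real.exp 1)⁻¹ := inv_pos.2 (Real.exp_pos 1)
  nlinarith

lemma abs_mapFinv (w : ℂ) (hw : ‖w‖ < 1) :
    ‖mapFinv w‖ =
      (Real.exp 1)⁻¹ * ‖w‖ /
        ((Real.exp 1)⁻¹ * ‖w‖ - ‖w‖ + 1) := by
  by_cases h : w = 0
  · simp [mapFinv, h]
  · have hd := denom_pos (norm_nonneg w) hw
    rw [mapFinv, if_neg h, norm_mul, norm_div, norm_mul]
    have hexp : ‖Complex.exp (-(2 * Real.pi * Complex.I *
        Real.log (‖w‖ / (1 - ‖w‖))))‖ = 1 := by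
      rw [Complex.norm_exp]
      simp
    rw [hexp, mul_one]
    have hden : ((Real.exp 1)⁻¹ * (‖w‖ : ℂ) - (‖w‖ : ℂ) + 1)
        = (((Real.exp 1)⁻¹ * ‖w‖ - ‖w‖ + 1 : ℝ) : ℂ) := by
      push_cast; ring
    rw [hden, Complex.norm_real, Real.norm_eq_abs, abs_of_pos (inv_pos.2 (Real.exp_pos 1)),
      Complex.norm_real, Real.norm_eq_abs, abs_of_pos hd]

lemma s_mapFinv (w : ℂ) (hw : ‖w‖ < 1) :
    ‖mapFinv w‖ < 1 ∧
    ‖mapFinv w‖ / (1 - ‖mapFinv w‖) =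
      (Real.exp 1)⁻¹ * (‖w‖ / (1 - ‖w‖)) := by
  have h0 := norm_nonneg w
  have hd := denom_pos h0 hw
  have habs := abs_mapFinv w hw
  set r := ‖w‖ with hr
  set d := (Real.exp 1)⁻¹ * r - r + 1 with hdd
  have he : 0 < (Real.exp 1)⁻¹ := inv_pos.2 (Real.exp_pos 1)
  have hlt : ‖mapFinv w‖ < 1 := by
    rw [habs, div_lt_one hd]; linarith
  refine ⟨hlt, ?_⟩
  rw [habs]
  have h1 : 1 - (Real.exp 1)⁻¹ * r / d = (1 - r) / d := by
    rw [eq_div_iff hd.ne', sub_mul, one_mul, div_mul_cancel₀ _ hd.ne', hdd]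
    ring
  rw [h1, div_div_div_cancel_right₀ hd.ne', mul_div_assoc]

lemma iter_bound (w : ℂ) (hw : ‖w‖ < 1) (n : ℕ) :
    ‖mapFinv^[n] w‖ < 1 ∧
    ‖mapFinv^[n] w‖ / (1 - ‖mapFinv^[n] w‖) =
      ((Real.exp 1)⁻¹) ^ n * (‖w‖ / (1 - ‖w‖)) := by
  induction n with
  | zero => simpa using hw
  | succ n ih =>
    obtain ⟨h1, h2⟩ := ih
    obtain ⟨hlt, hs⟩ := s_mapFinv _ h1
    rw [Function.iterate_succ_apply']
    refine ⟨hlt, ?_⟩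
    rw [hs, h2]; ring

lemma iter_tendsto (w : ℂ) (hw : ‖w‖ < 1) :
    Tendsto (fun n => mapFinv^[n] w) atTop (nhds 0) := by
  rw [tendsto_zero_iff_norm_tendsto_zero]
  have hub : ∀ n : ℕ, ‖mapFinv^[n] w‖ ≤
      ((Real.exp 1)⁻¹) ^ n * (‖w‖ / (1 - ‖w‖)) := by
    intro n
    obtain ⟨h1, h2⟩ := iter_bound w hw n
    rw [← h2]
    have h0 := norm_nonneg (mapFinv^[n] w)
    rw [le_div_iff₀ (by linarith)]
    nlinarith
  have hlim : Tendsto (fun n : ℕ => ((Real.exp 1)⁻¹) ^ n *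
      (‖w‖ / (1 - ‖w‖))) atTop (nhds 0) := by
    have h1 : (Real.exp 1)⁻¹ < 1 := by
      rw [inv_lt_one_iff₀]
      right
      nlinarith [Real.add_one_le_exp 1]
    have := tendsto_pow_atTop_nhds_zero_of_lt_one
      (le_of_lt (inv_pos.2 (Real.exp_pos 1))) h1
    simpa using this.mul_const _
  exact squeeze_zero (fun n => norm_nonneg _) hub hlim

/-- The map `F` of the open unit disk is not Li-Yorke chaotic. -/
theorem stmt_15 :
    ¬ ∃ Γ : Set ℂ, Γ ⊆ unitDisk ∧ ¬ Γ.Countable ∧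
      ∀ x ∈ Γ, ∀ y ∈ Γ, x ≠ y → LiYorkePair mapFinv x y := by
  rintro ⟨Γ, hsub, hc, hpair⟩
  obtain ⟨x, hx, y, hy, hxy⟩ := Set.not_subsingleton_iff.mp
    (fun hs => hc hs.countable)
  have hx' : ‖x‖ < 1 := hsub hx
  have hy' : ‖y‖ < 1 := hsub hy
  have hT : Tendsto (fun n : ℕ => edist (mapFinv^[n] x) (mapFinv^[n] y))
      atTop (nhds 0) := by
    have := (iter_tendsto x hx').edist (iter_tendsto y hy')
    simpa using this
  obtain ⟨hpos, _⟩ := hpair x hx y hy hxy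
  rw [hT.limsup_eq] at hpos
  exact lt_irrefl 0 hpos
end

section
/- Let x, y ∈ (0,1) be real numbers (viewed as points of 𝔻) such that ln(x/(1−x)) − ln(y/(1−y)) is irrational. Then limsup_{n→∞} |fⁿ(x) − fⁿ(y)| = 2; in particular {x,y} is a Li-Yorke chaotic pair for f. -/
open Filter


/-- Logistic-type radius: the radius whose "logit" is `t`. -/
noncomputable def Rlog (t : ℝ) : ℝ := Real.exp t / (1 + Real.exp t)

lemma Rlog_pos (t : ℝ) : 0 < Rlog t :=
  div_pos (Real.exp_pos t) (by positivity)

lemma Rlog_lt_one (t : ℝ) : Rlog t < 1 := by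
  rw [Rlog, div_lt_one (by positivity)]; linarith

lemma one_sub_Rlog (t : ℝ) : 1 - Rlog t = 1 / (1 + Real.exp t) := by
  rw [Rlog]; field_simp; ring

lemma Rlog_div_one_sub (t : ℝ) : Rlog t / (1 - Rlog t) = Real.exp t := by
  rw [one_sub_Rlog, Rlog]
  have h : (0:ℝ) < 1 + Real.exp t := by positivity
  field_simp

lemma log_Rlog (t : ℝ) : Real.log (Rlog t / (1 - Rlog t)) = t := by
  rw [Rlog_div_one_sub, Real.log_exp]

/-- The phase `e^{2πia}`. -/
noncomputable def ph (a : ℝ) : ℂ := Complex.exp (2 * Real.pi * Complex.I * a)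

lemma ph_ne_zero (a : ℝ) : ph a ≠ 0 := Complex.exp_ne_zero _

lemma abs_ph (a : ℝ) : ‖(ph a)‖ = 1 := by
  rw [ph, Complex.norm_exp]
  have : (2 * (Real.pi:ℂ) * Complex.I * a).re = 0 := by simp [Complex.ext_iff]
  rw [this, Real.exp_zero]

lemma ph_add (a b : ℝ) : ph (a + b) = ph a * ph b := by
  rw [ph, ph, ph, ← Complex.exp_add]; push_cast; ring_nf

lemma ph_int (m : ℤ) : ph m = 1 := by
  rw [ph, show (2 * (Real.pi:ℂ) * Complex.I * ((m:ℝ):ℂ)) = (m:ℂ) * (2 * Real.pi * Complex.I) by push_cast; ring]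
  exact Complex.exp_int_mul_two_pi_mul_I m

lemma ph_add_int (a : ℝ) (m : ℤ) : ph (a + m) = ph a := by
  rw [ph_add, ph_int, mul_one]

lemma ph_half : ph (1/2) = -1 := by
  rw [ph, show (2 * (Real.pi:ℂ) * Complex.I * ((1/2:ℝ):ℂ)) = Real.pi * Complex.I by push_cast; ring]
  exact Complex.exp_pi_mul_I

lemma ph_zero : ph 0 = 1 := by simp [ph]

lemma abs_ph_sub_one (c : ℝ) (hc : |c| ≤ 1/7) :
    ‖(ph c - 1)‖ ≤ 4 * Real.pi * |c| := by
  have habs : ‖(2 * (Real.pi:ℂ) * Complex.I * c)‖ = 2 * Real.pi * |c| := by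
    simp [norm_mul, Complex.norm_real, Real.norm_eq_abs, abs_of_pos Real.pi_pos, Complex.norm_two]
  have h1 : ‖(2 * (Real.pi:ℂ) * Complex.I * c)‖ ≤ 1 := by
    rw [habs]
    nlinarith [Real.pi_lt_d2, Real.pi_pos, abs_nonneg c]
  have := Complex.norm_exp_sub_one_le h1
  rw [habs] at this
  calc ‖(ph c - 1)‖ ≤ 2 * (2 * Real.pi * |c|) := this
    _ = 4 * Real.pi * |c| := by ring
-- key algebraic identity for the radius
lemma Rlog_key (t : ℝ) :
    Rlog (t+1) * (Real.exp 1 * Rlog t - Rlog t + 1) = Real.exp 1 * Rlog t := by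
  have h1 : (0:ℝ) < 1 + Real.exp t := by positivity
  have h2 : (0:ℝ) < 1 + Real.exp (t+1) := by positivity
  have h3 : Real.exp (t+1) = Real.exp t * Real.exp 1 := Real.exp_add t 1
  rw [Rlog, Rlog, h3]
  field_simp
  ring

lemma denom_pos_s17 (t : ℝ) : 0 < Real.exp 1 * Rlog t - Rlog t + 1 := by
  have h1 := Rlog_pos t
  have h2 := Rlog_lt_one t
  nlinarith [Real.exp_one_gt_d9]

lemma mapF_step (t a : ℝ) :
    mapF ((Rlog t : ℂ) * ph a) = (Rlog (t+1) : ℂ) * ph (a + t) := by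
  have hR := Rlog_pos t
  have h0 : (Rlog t : ℂ) * ph a ≠ 0 :=
    mul_ne_zero (by exact_mod_cast hR.ne') (ph_ne_zero a)
  have habs : ‖((Rlog t : ℂ) * ph a)‖ = Rlog t := by
    rw [norm_mul, abs_ph, Complex.norm_real, Real.norm_eq_abs, abs_of_pos hR, mul_one]
  rw [mapF, if_neg h0, habs, log_Rlog]
  have hD : (Real.exp 1 * Rlog t - Rlog t + 1 : ℝ) ≠ 0 := (denom_pos_s17 t).ne'
  have hDc : ((Real.exp 1 : ℝ):ℂ) * (Rlog t : ℂ) - (Rlog t : ℂ) + 1 ≠ 0 := by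
    rw [show ((Real.exp 1 : ℝ):ℂ) * (Rlog t : ℂ) - (Rlog t : ℂ) + 1
        = ((Real.exp 1 * Rlog t - Rlog t + 1 : ℝ) : ℂ) by push_cast; ring]
    exact_mod_cast hD
  have key : ((Rlog (t+1) : ℝ):ℂ) * (((Real.exp 1 : ℝ):ℂ) * (Rlog t : ℂ) - (Rlog t : ℂ) + 1)
      = ((Real.exp 1 : ℝ):ℂ) * (Rlog t : ℂ) := by
    exact_mod_cast congrArg (Complex.ofReal) (Rlog_key t)
  rw [ph_add]
  rw [div_mul_eq_mul_div, div_eq_iff hDc]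
  have hpht : Complex.exp (2 * Real.pi * Complex.I * (t:ℝ)) = ph t := rfl
  rw [hpht]
  linear_combination (-(ph a * ph t)) * key

lemma mapF_iter (t a : ℝ) (n : ℕ) :
    mapF^[n] ((Rlog t : ℂ) * ph a)
      = (Rlog (t + n) : ℂ) * ph (a + n * t + n * (n - 1) / 2) := by
  induction n with
  | zero => norm_num
  | succ n ih =>
    rw [Function.iterate_succ_apply', ih, mapF_step]
    congr 2
    · push_cast; ring
    · push_cast; ring
-- helper lemmas for the main proof

lemma abs_coe_mul_ph (r : ℝ) (hr : 0 ≤ r) (a : ℝ) :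
    ‖((r:ℂ) * ph a)‖ = r := by
  rw [norm_mul, abs_ph, Complex.norm_real, Real.norm_eq_abs, abs_of_nonneg hr, mul_one]

lemma abs_comb (r s : ℝ) (a b : ℝ) :
    ‖((r:ℂ) * ph a - (s:ℂ) * ph b)‖
      = ‖((r:ℂ) - (s:ℂ) * ph (b - a))‖ := by
  have h : (r:ℂ) * ph a - (s:ℂ) * ph b = ph a * ((r:ℂ) - (s:ℂ) * ph (b - a)) := by
    rw [mul_sub]
    congr 1
    · ring
    · rw [show ph a * ((s:ℂ) * ph (b-a)) = (s:ℂ) * (ph a * ph (b-a)) by ring, ← ph_add,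
        add_sub_cancel]
  rw [h, norm_mul, abs_ph, one_mul]

lemma ph_neg_half_shift (η : ℝ) (m : ℤ) : ph (-η - 1/2 - m) = -ph (-η) := by
  have h1 : (-η - 1/2 - m : ℝ) = (-η + 1/2) + (-(m+1) : ℤ) := by push_cast; ring
  rw [h1, ph_add_int, ph_add, ph_half, mul_neg_one]

lemma ph_shift_int (η : ℝ) (m : ℤ) : ph (-η - m) = ph (-η) := by
  have h1 : (-η - m : ℝ) = -η + (-m : ℤ) := by push_cast; ring
  rw [h1, ph_add_int]

lemma tendsto_Rlog : Filter.Tendsto Rlog Filter.atTop (nhds 1) := by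
  have h2 : Filter.Tendsto (fun t : ℝ => 1 + Real.exp t) Filter.atTop Filter.atTop :=
    Filter.tendsto_atTop_add_const_left _ 1 Real.tendsto_exp_atTop
  have h3 : Filter.Tendsto (fun t : ℝ => (1 + Real.exp t)⁻¹) Filter.atTop (nhds 0) :=
    h2.inv_tendsto_atTop
  have heq : Rlog = fun t : ℝ => 1 - (1 + Real.exp t)⁻¹ := by
    funext t
    have h : (0:ℝ) < 1 + Real.exp t := by positivity
    rw [Rlog]
    field_simp
    ring
  rw [heq]
  simpa using tendsto_const_nhds.sub h3

lemma Rlog_log (x : ℝ) (hx0 : 0 < x) (hx1 : x < 1) :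
    Rlog (Real.log (x / (1 - x))) = x := by
  have h1 : (0:ℝ) < 1 - x := by linarith
  have hpos : 0 < x / (1 - x) := div_pos hx0 h1
  rw [Rlog, Real.exp_log hpos]
  have h2 : 1 + x / (1 - x) = 1 / (1 - x) := by field_simp; ring
  rw [h2]
  field_simp
/-- Key density lemma: if `δ` is irrational and `2c` is an integer, then for every `ε > 0`
there are arbitrarily large `n : ℕ` with `n·δ` within `ε` of `c` modulo `1`. -/
lemma dense_orbit {δ : ℝ} (hirr : Irrational δ) (c : ℝ) (k2 : ℤ) (hk2 : (k2:ℝ) = 2 * c)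
    {ε : ℝ} (hε : 0 < ε) (N : ℕ) :
    ∃ n : ℕ, N ≤ n ∧ ∃ m : ℤ, |n * δ - m - c| < ε := by
  set ε₁ : ℝ := min ε 1 with hε₁def
  have hε₁ : 0 < ε₁ := lt_min hε one_pos
  have hε₁le : ε₁ ≤ ε := min_le_left _ _
  have hε₁le1 : ε₁ ≤ 1 := min_le_right _ _
  set S : AddSubgroup ℝ := AddSubgroup.closure ({δ, 1} : Set ℝ) with hS
  have hδS : δ ∈ S := AddSubgroup.subset_closure (by simp)
  have h1S : (1:ℝ) ∈ S := AddSubgroup.subset_closure (by simp)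
  have hdense : Dense (S : Set ℝ) := by
    rcases S.dense_or_cyclic with h | ⟨a, ha⟩
    · exact h
    · exfalso
      rw [ha, AddSubgroup.mem_closure_singleton] at hδS h1S
      obtain ⟨k, hk⟩ := hδS
      obtain ⟨l, hl⟩ := h1S
      have hl0 : l ≠ 0 := by rintro rfl; simp at hl
      have ha0 : a ≠ 0 := by rintro rfl; simp at hl
      refine hirr ⟨(k : ℚ) / l, ?_⟩
      rw [zsmul_eq_mul] at hk hl
      have hlne : (l:ℝ) ≠ 0 := Int.cast_ne_zero.mpr hl0
      have hdl : δ * l = (k:ℝ) := by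
        calc δ * l = ((k:ℝ) * a) * l := by rw [hk]
          _ = (k:ℝ) * ((l:ℝ) * a) := by ring
          _ = (k:ℝ) := by rw [hl, mul_one]
      push_cast
      rw [div_eq_iff hlne, ← hdl]
  -- pick a small positive element of S
  obtain ⟨s, hsS, hs⟩ := hdense.exists_mem_open isOpen_Ioo
    (Set.nonempty_Ioo.mpr (by linarith : (0:ℝ) < ε₁))
  obtain ⟨hs0, hsε⟩ := hs
  rw [SetLike.mem_coe, AddSubgroup.mem_closure_pair] at hsS
  obtain ⟨p, q, hpq⟩ := hsS
  simp only [zsmul_eq_mul, mul_one] at hpq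
  have hp0 : p ≠ 0 := by
    rintro rfl
    simp only [Int.cast_zero, zero_mul, zero_add] at hpq
    have h1 : (0:ℝ) < q := hpq ▸ hs0
    have h2 : (q:ℝ) < 1 := by linarith [hpq ▸ lt_of_lt_of_le hsε hε₁le1]
    have : 0 < q := by exact_mod_cast h1
    have : q < 1 := by exact_mod_cast h2
    omega
  -- choose a multiple of s close to c + B for a large integer B
  set B : ℤ := ⌈(N:ℝ) * s + |c| + 1⌉ with hB
  have hBge : (N:ℝ) * s + |c| + 1 ≤ (B:ℝ) := Int.le_ceil _
  have hcB : 0 < c + B := by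
    have : -|c| ≤ c := neg_abs_le c
    have hNs : 0 ≤ (N:ℝ) * s := by positivity
    linarith
  set k : ℤ := ⌈(c + B)/s⌉ with hk
  have hks_ge : c + B ≤ k * s := by
    have h1 : (c + B)/s ≤ (k:ℝ) := Int.le_ceil _
    rwa [div_le_iff₀ hs0] at h1
  have hks_lt : (k:ℝ) * s < c + B + ε₁ := by
    have h1 : (k:ℝ) < (c + B)/s + 1 := Int.ceil_lt_add_one _
    have := mul_lt_mul_of_pos_right h1 hs0
    rw [add_mul, div_mul_cancel₀ _ hs0.ne', one_mul] at this
    linarith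
  have hkpos : 0 < k := by
    by_contra h
    push_neg at h
    have : (k:ℝ) * s ≤ 0 := mul_nonpos_of_nonpos_of_nonneg (by exact_mod_cast h) hs0.le
    linarith
  have hkN : (N:ℝ) < (k:ℝ) := by
    have h1 : (N:ℝ) * s < c + B := by
      have : -|c| ≤ c := neg_abs_le c
      linarith
    have h2 : (N:ℝ) * s < (k:ℝ) * s := lt_of_lt_of_le h1 hks_ge
    exact lt_of_mul_lt_mul_right h2 hs0.le
  -- the element k*s = (k*p)δ + k*q
  set P : ℤ := k * p with hP
  set m₀ : ℤ := B - k * q with hm₀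
  have hPest : |(P:ℝ) * δ - m₀ - c| < ε₁ := by
    have : (P:ℝ) * δ - m₀ - c = (k:ℝ) * s - (c + B) := by
      rw [← hpq, hP, hm₀]
      push_cast
      ring
    rw [this, abs_sub_lt_iff]
    constructor <;> linarith
  have hPN : (N:ℤ) ≤ |P| := by
    have hp1 : 1 ≤ |p| := Int.one_le_abs (by exact_mod_cast hp0)
    have : (N:ℤ) < k := by exact_mod_cast hkN
    calc (N:ℤ) ≤ k := this.le
      _ = k * 1 := (mul_one k).symm
      _ ≤ k * |p| := mul_le_mul_of_nonneg_left hp1 hkpos.le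
      _ = |k| * |p| := by rw [abs_of_pos hkpos]
      _ = |P| := (abs_mul k p).symm
  refine ⟨P.natAbs, by exact_mod_cast hPN.trans_eq (Int.abs_eq_natAbs P), ?_⟩
  rcases le_or_gt 0 P with hPpos | hPneg
  · refine ⟨m₀, ?_⟩
    have : ((P.natAbs : ℕ) : ℝ) = (P:ℝ) := by
      rw [Nat.cast_natAbs]
      exact_mod_cast abs_of_nonneg hPpos
    rw [this]
    exact lt_of_lt_of_le hPest hε₁le
  · refine ⟨-m₀ - k2, ?_⟩
    have hcast : ((P.natAbs : ℕ) : ℝ) = -(P:ℝ) := by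
      rw [Nat.cast_natAbs]
      exact_mod_cast abs_of_nonpos hPneg.le
    rw [hcast]
    have : -(P:ℝ) * δ - (↑(-m₀ - k2)) - c = -((P:ℝ) * δ - m₀ - c) := by
      push_cast [hk2]
      ring
    rw [this, abs_neg]
    exact lt_of_lt_of_le hPest hε₁le


/-- For `x, y ∈ (0,1)` with `ln(x/(1-x)) - ln(y/(1-y))` irrational, the distances between the
iterates of `f` at `x` and `y` have limsup `2`; in particular `{x, y}` is a Li-Yorke chaotic
pair for `f`. -/
theorem stmt_17 (x y : ℝ) (hx : x ∈ Set.Ioo (0 : ℝ) 1) (hy : y ∈ Set.Ioo (0 : ℝ) 1)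
    (hirr : Irrational (Real.log (x / (1 - x)) - Real.log (y / (1 - y)))) :
    Filter.limsup (fun n : ℕ => ‖mapF^[n] (x : ℂ) - mapF^[n] (y : ℂ)‖)
        Filter.atTop = 2 ∧
      LiYorkePair mapF (x : ℂ) (y : ℂ) := by
  obtain ⟨hx0, hx1⟩ := hx
  obtain ⟨hy0, hy1⟩ := hy
  set tx := Real.log (x / (1 - x)) with htx
  set ty := Real.log (y / (1 - y)) with hty
  set δ := tx - ty with hδ
  set D : ℕ → ℝ := fun n => ‖(mapF^[n] (x : ℂ) - mapF^[n] (y : ℂ))‖ with hDdef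
  -- iterate formulas
  have hxs : (x:ℂ) = (Rlog tx : ℂ) * ph 0 := by
    rw [ph_zero, mul_one, Rlog_log x hx0 hx1]
  have hys : (y:ℂ) = (Rlog ty : ℂ) * ph 0 := by
    rw [ph_zero, mul_one, Rlog_log y hy0 hy1]
  have hDform : ∀ n : ℕ, D n
      = ‖((Rlog (tx + n) : ℂ) - (Rlog (ty + n) : ℂ) * ph (-(n * δ)))‖ := by
    intro n
    have e1 : mapF^[n] (x:ℂ) = (Rlog (tx + n) : ℂ) * ph (0 + n * tx + n * (n - 1) / 2) := by
      rw [hxs, mapF_iter]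
    have e2 : mapF^[n] (y:ℂ) = (Rlog (ty + n) : ℂ) * ph (0 + n * ty + n * (n - 1) / 2) := by
      rw [hys, mapF_iter]
    have e3 : (0 + n * ty + n * (n - 1) / 2) - (0 + n * tx + n * (n - 1) / 2) = -(n * δ) := by
      rw [hδ]; ring
    rw [hDdef]
    simp only
    rw [e1, e2, abs_comb, e3]
  -- bounds on radii
  have hr0 : ∀ n : ℕ, 0 < Rlog (tx + n) := fun n => Rlog_pos _
  have hr1 : ∀ n : ℕ, Rlog (tx + n) < 1 := fun n => Rlog_lt_one _
  have hs0 : ∀ n : ℕ, 0 < Rlog (ty + n) := fun n => Rlog_pos _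
  have hs1 : ∀ n : ℕ, Rlog (ty + n) < 1 := fun n => Rlog_lt_one _
  -- upper bound
  have hub : ∀ n : ℕ, D n ≤ 2 := by
    intro n
    rw [hDform n]
    calc ‖((Rlog (tx + n) : ℂ) - (Rlog (ty + n) : ℂ) * ph (-(n * δ)))‖
        ≤ ‖(Rlog (tx + n) : ℂ)‖
            + ‖((Rlog (ty + n) : ℂ) * ph (-(n * δ)))‖ := by
          rw [sub_eq_add_neg]
          refine (norm_add_le _ _).trans ?_
          rw [norm_neg]
      _ = Rlog (tx + n) + Rlog (ty + n) := by
          rw [abs_coe_mul_ph _ (hs0 n).le, Complex.norm_real, Real.norm_eq_abs, abs_of_pos (hr0 n)]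
      _ ≤ 2 := by linarith [hr1 n, hs1 n]
  -- radius eventual bounds
  have hradx : Filter.Tendsto (fun n : ℕ => Rlog (tx + n)) Filter.atTop (nhds 1) :=
    tendsto_Rlog.comp (Filter.tendsto_atTop_add_const_left _ tx tendsto_natCast_atTop_atTop)
  have hrady : Filter.Tendsto (fun n : ℕ => Rlog (ty + n)) Filter.atTop (nhds 1) :=
    tendsto_Rlog.comp (Filter.tendsto_atTop_add_const_left _ ty tendsto_natCast_atTop_atTop)
  have hrad : ∀ ε : ℝ, 0 < ε → ∀ᶠ n : ℕ in Filter.atTop,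
      1 - ε < Rlog (tx + n) ∧ 1 - ε < Rlog (ty + n) := by
    intro ε hε
    have h1 : (1 - ε : ℝ) < 1 := by linarith
    exact (hradx.eventually (eventually_gt_nhds h1)).and
      (hrady.eventually (eventually_gt_nhds h1))
  have hpi := Real.pi_pos
  -- frequently large distance
  have hhigh : ∀ ε : ℝ, 0 < ε → ∃ᶠ n : ℕ in Filter.atTop, 2 - ε < D n := by
    intro ε hε
    set ε' : ℝ := min (ε / (16 * Real.pi)) (1/7) with hε'def
    have hε' : 0 < ε' := lt_min (by positivity) (by norm_num)
    have hfreq : ∃ᶠ n : ℕ in Filter.atTop, ∃ m : ℤ, |n * δ - m - 1/2| < ε' :=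
      Filter.frequently_atTop.mpr fun N => by
        obtain ⟨n, hn, hm⟩ := dense_orbit hirr (1/2) 1 (by norm_num) hε' N
        exact ⟨n, hn, hm⟩
    refine (hfreq.and_eventually (hrad (ε/8) (by positivity))).mono ?_
    rintro n ⟨⟨m, hm⟩, hrx, hry⟩
    set r := Rlog (tx + n)
    set s := Rlog (ty + n)
    set η : ℝ := n * δ - m - 1/2 with hηdef
    have hphase : ph (-(n * δ)) = -ph (-η) := by
      have : (-(n * δ) : ℝ) = -η - 1/2 - m := by rw [hηdef]; ring
      rw [this, ph_neg_half_shift]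
    have hD : D n = ‖(((r + s : ℝ) : ℂ) + (s:ℂ) * (ph (-η) - 1))‖ := by
      rw [hDform n, hphase]
      congr 1
      push_cast
      ring
    have hsmall : ‖((s:ℂ) * (ph (-η) - 1))‖ ≤ 4 * Real.pi * |η| := by
      rw [norm_mul, Complex.norm_real, Real.norm_eq_abs, abs_of_pos (hs0 n)]
      have h1 : |(-η : ℝ)| ≤ 1/7 := by
        rw [abs_neg]
        exact (hm.le.trans (min_le_right _ _))
      have h2 := abs_ph_sub_one (-η) h1
      rw [abs_neg] at h2
      nlinarith [abs_ph_sub_one (-η) h1, (hs1 n), (hs0 n), abs_nonneg η,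
        norm_nonneg (ph (-η) - 1)]
    have hηε : 4 * Real.pi * |η| < ε / 4 := by
      have h1 : |η| < ε / (16 * Real.pi) := lt_of_lt_of_le hm (min_le_left _ _)
      calc 4 * Real.pi * |η| < 4 * Real.pi * (ε / (16 * Real.pi)) := by
            apply mul_lt_mul_of_pos_left h1 (by positivity)
        _ = ε / 4 := by field_simp; ring
    have htri : (r + s : ℝ) - ‖((s:ℂ) * (ph (-η) - 1))‖ ≤ D n := by
      rw [hD]
      have h1 : ‖(((r + s : ℝ) : ℂ))‖
          ≤ ‖(((r + s : ℝ) : ℂ) + (s:ℂ) * (ph (-η) - 1))‖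
            + ‖((s:ℂ) * (ph (-η) - 1))‖ := by
        calc ‖(((r + s : ℝ) : ℂ))‖
            = ‖((((r + s : ℝ) : ℂ) + (s:ℂ) * (ph (-η) - 1))
              - (s:ℂ) * (ph (-η) - 1))‖ := by ring_nf
          _ ≤ _ := norm_sub_le _ _
      have h2 : ‖(((r + s : ℝ) : ℂ))‖ = r + s := by
        rw [Complex.norm_real, Real.norm_eq_abs, abs_of_pos (add_pos (hr0 n) (hs0 n))]
      linarith
    have : 2 - ε < (r + s : ℝ) - ‖((s:ℂ) * (ph (-η) - 1))‖ := by
      have := hsmall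
      linarith
    linarith
  -- frequently small distance
  have hlow : ∀ ε : ℝ, 0 < ε → ∃ᶠ n : ℕ in Filter.atTop, D n < ε := by
    intro ε hε
    set ε' : ℝ := min (ε / (16 * Real.pi)) (1/7) with hε'def
    have hε' : 0 < ε' := lt_min (by positivity) (by norm_num)
    have hfreq : ∃ᶠ n : ℕ in Filter.atTop, ∃ m : ℤ, |n * δ - m - 0| < ε' :=
      Filter.frequently_atTop.mpr fun N => by
        obtain ⟨n, hn, hm⟩ := dense_orbit hirr 0 0 (by norm_num) hε' N
        exact ⟨n, hn, hm⟩
    refine (hfreq.and_eventually (hrad (ε/8) (by positivity))).mono ?_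
    rintro n ⟨⟨m, hm⟩, hrx, hry⟩
    rw [sub_zero] at hm
    set r := Rlog (tx + n)
    set s := Rlog (ty + n)
    set η : ℝ := n * δ - m with hηdef
    have hphase : ph (-(n * δ)) = ph (-η) := by
      have : (-(n * δ) : ℝ) = -η - m := by rw [hηdef]; ring
      rw [this, ph_shift_int]
    have hD : D n = ‖(((r - s : ℝ) : ℂ) - (s:ℂ) * (ph (-η) - 1))‖ := by
      rw [hDform n, hphase]
      congr 1
      push_cast
      ring
    have hsmall : ‖((s:ℂ) * (ph (-η) - 1))‖ ≤ 4 * Real.pi * |η| := by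
      rw [norm_mul, Complex.norm_real, Real.norm_eq_abs, abs_of_pos (hs0 n)]
      have h1 : |(-η : ℝ)| ≤ 1/7 := by
        rw [abs_neg]
        exact (hm.le.trans (min_le_right _ _))
      have h2 := abs_ph_sub_one (-η) h1
      rw [abs_neg] at h2
      nlinarith [(hs1 n), (hs0 n), abs_nonneg η, norm_nonneg (ph (-η) - 1)]
    have hηε : 4 * Real.pi * |η| < ε / 4 := by
      have h1 : |η| < ε / (16 * Real.pi) := lt_of_lt_of_le hm (min_le_left _ _)
      calc 4 * Real.pi * |η| < 4 * Real.pi * (ε / (16 * Real.pi)) := by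
            apply mul_lt_mul_of_pos_left h1 (by positivity)
        _ = ε / 4 := by field_simp; ring
    have habs_rs : ‖(((r - s : ℝ) : ℂ))‖ < ε / 4 := by
      rw [Complex.norm_real, Real.norm_eq_abs]
      rw [abs_sub_lt_iff]
      constructor <;> [linarith [hr1 n]; linarith [hs1 n]]
    calc D n ≤ ‖(((r - s : ℝ) : ℂ))‖ + ‖((s:ℂ) * (ph (-η) - 1))‖ := by
          rw [hD]; exact norm_sub_le _ _
      _ < ε / 4 + ε / 4 := by linarith
      _ ≤ ε := by linarith
  -- limsup = 2
  have hbdd : Filter.IsBoundedUnder (· ≤ ·) Filter.atTop D :=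
    Filter.isBoundedUnder_of ⟨2, hub⟩
  have hcob : Filter.IsCoboundedUnder (· ≤ ·) Filter.atTop D :=
    Filter.IsCoboundedUnder.of_frequently_ge (a := 1) ((hhigh 1 one_pos).mono fun n hn => by linarith)
  have hlimsup : Filter.limsup D Filter.atTop = 2 := by
    refine le_antisymm ?_ ?_
    · exact Filter.limsup_le_of_le hcob (Filter.Eventually.of_forall hub)
    · refine le_of_forall_sub_le fun ε hε => ?_
      exact Filter.le_limsup_of_frequently_le
        ((hhigh ε hε).mono fun n hn => hn.le) hbdd
  refine ⟨hlimsup, ?_, ?_⟩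
  · -- positive limsup of edist
    have h1 : (1 : ENNReal) ≤ Filter.limsup
        (fun n : ℕ => edist (mapF^[n] (x:ℂ)) (mapF^[n] (y:ℂ))) Filter.atTop := by
      apply Filter.le_limsup_of_frequently_le'
      refine ((hhigh 1 one_pos).mono fun n hn => ?_)
      rw [edist_dist, Complex.dist_eq]
      have : (1:ℝ) ≤ D n := by
        rw [hDdef]; simp only; linarith [hn]
      calc (1 : ENNReal) = ENNReal.ofReal 1 := by simp
        _ ≤ ENNReal.ofReal (‖(mapF^[n] (x:ℂ) - mapF^[n] (y:ℂ))‖) :=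
            ENNReal.ofReal_le_ofReal this
    exact lt_of_lt_of_le (by norm_num) h1
  · -- liminf of edist is zero
    refine le_antisymm ?_ zero_le
    refine ENNReal.le_of_forall_pos_le_add fun ε hε _ => ?_
    rw [zero_add]
    apply Filter.liminf_le_of_frequently_le'
    refine ((hlow ε (by exact_mod_cast hε)).mono fun n hn => ?_)
    rw [edist_dist, Complex.dist_eq]
    calc ENNReal.ofReal (‖(mapF^[n] (x:ℂ) - mapF^[n] (y:ℂ))‖)
        ≤ ENNReal.ofReal ε := ENNReal.ofReal_le_ofReal (le_of_lt hn)
      _ = (ε : ENNReal) := ENNReal.ofReal_coe_nnreal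
end

section
/- The map f is Li-Yorke chaotic: there exists an uncountable set Γ ⊆ 𝔻 such that every pair of distinct points of Γ is a Li-Yorke chaotic pair for f. -/

noncomputable def ptC (c : ℝ) : ℂ := ((Real.exp c / (1 + Real.exp c) : ℝ) : ℂ)
noncomputable def EC (θ : ℝ) : ℂ := Complex.exp (2 * Real.pi * Complex.I * θ)

lemma one_add_exp_pos (c : ℝ) : (0:ℝ) < 1 + Real.exp c := by positivity

lemma ptR_pos (c : ℝ) : (0:ℝ) < Real.exp c / (1 + Real.exp c) := by positivity

lemma ptR_lt_one (c : ℝ) : Real.exp c / (1 + Real.exp c) < 1 := by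
  rw [div_lt_one (one_add_exp_pos c)]; linarith

lemma EC_abs (θ : ℝ) : ‖EC θ‖ = 1 := by
  have : (2 * Real.pi * Complex.I * θ) = ((2 * Real.pi * θ : ℝ) : ℂ) * Complex.I := by
    push_cast; ring
  rw [EC, this, Complex.norm_exp_ofReal_mul_I]

lemma EC_add (a b : ℝ) : EC (a + b) = EC a * EC b := by
  rw [EC, EC, EC, ← Complex.exp_add]; ring_nf; push_cast; ring_nf

lemma EC_int (n : ℤ) : EC n = 1 := by
  rw [EC, show (2 * Real.pi * Complex.I * (n:ℝ) : ℂ) = (n:ℂ) * (2 * Real.pi * Complex.I) by push_cast; ring]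
  exact Complex.exp_int_mul_two_pi_mul_I n

lemma EC_ne_zero (θ : ℝ) : EC θ ≠ 0 := Complex.exp_ne_zero _

lemma abs_pt_mul_EC (c θ : ℝ) : ‖ptC c * EC θ‖ = Real.exp c / (1 + Real.exp c) := by
  rw [norm_mul, EC_abs, mul_one, ptC, Complex.norm_real, Real.norm_eq_abs,
    abs_of_pos (ptR_pos c)]

lemma pt_mul_EC_ne_zero (c θ : ℝ) : ptC c * EC θ ≠ 0 := by
  intro h
  have := abs_pt_mul_EC c θ
  rw [h, norm_zero] at this
  exact absurd this.symm (ne_of_gt (ptR_pos c))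

lemma mapF_pt (c θ : ℝ) : mapF (ptC c * EC θ) = ptC (c+1) * EC (θ + c) := by
  set r : ℝ := Real.exp c / (1 + Real.exp c) with hr
  have hne := pt_mul_EC_ne_zero c θ
  have habs := abs_pt_mul_EC c θ
  have h1r : (1 : ℝ) - r = 1 / (1 + Real.exp c) := by
    rw [hr]; field_simp; ring
  have hlog : Real.log (r / (1 - r)) = c := by
    have : r / (1 - r) = Real.exp c := by
      rw [h1r, hr]; field_simp
    rw [this, Real.log_exp]
  rw [mapF, if_neg hne, habs, hlog]
  have hRe : Real.exp 1 * r / (Real.exp 1 * r - r + 1) = Real.exp (c+1) / (1 + Real.exp (c+1)) := by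
    have hden : (Real.exp 1 * r - r + 1 : ℝ) = (Real.exp (c+1) + 1) / (1 + Real.exp c) := by
      rw [hr, Real.exp_add]; field_simp; ring
    rw [hden, hr, Real.exp_add]
    have h1 := (one_add_exp_pos c).ne'
    have h2 : Real.exp c * Real.exp 1 + 1 ≠ 0 := by positivity
    field_simp
    ring
  have hscal : (Real.exp 1 : ℂ) * (r:ℂ) / ((Real.exp 1:ℂ) * (r:ℂ) - (r:ℂ) + 1) = ptC (c+1) := by
    rw [ptC]
    exact_mod_cast congrArg (Complex.ofReal) hRe
  have hpt : ptC c = (r:ℂ) := by rw [ptC]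
  rw [EC_add, ← hscal, hpt]; simp only [EC]
  ring

lemma iterF (a : ℝ) : ∀ n : ℕ, mapF^[n] (ptC a) = ptC (a + n) * EC (n * a)
  | 0 => by simp [EC, ptC]
  | (n+1) => by
    rw [Function.iterate_succ_apply', iterF a n, mapF_pt]
    have h1 : (a + n) + 1 = a + (n+1 : ℕ) := by push_cast; ring
    have h2 : (n * a) + (a + n) = ((n+1:ℕ) * a) + (n : ℤ) := by push_cast; ring
    rw [h1, h2, EC_add, EC_int, mul_one]

open Filter Topology

lemma tendsto_rho (a : ℝ) :
    Tendsto (fun n : ℕ => Real.exp (a + n) / (1 + Real.exp (a + n))) atTop (𝓝 1) := by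
  have hx : Tendsto (fun n : ℕ => 1 + Real.exp (a + n)) atTop atTop := by
    apply tendsto_atTop_add_const_left
    exact Real.tendsto_exp_atTop.comp
      (tendsto_atTop_add_const_left _ a tendsto_natCast_atTop_atTop)
  have h0 : Tendsto (fun n : ℕ => (1 + Real.exp (a + n))⁻¹) atTop (𝓝 0) :=
    tendsto_inv_atTop_zero.comp hx
  have heq : (fun n : ℕ => Real.exp (a + n) / (1 + Real.exp (a + n)))
      = fun n : ℕ => 1 - (1 + Real.exp (a + n))⁻¹ := by
    funext n
    have := (one_add_exp_pos (a + n)).ne'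
    field_simp
    ring
  rw [heq]
  simpa using (tendsto_const_nhds (x := (1:ℝ))).sub h0

lemma near_int (θ : ℝ) {δ : ℝ} (hδ : 0 < δ) (N : ℕ) :
    ∃ n : ℕ, N ≤ n ∧ ∃ m : ℤ, |(n:ℝ) * θ - m| < δ := by
  set N' : ℕ := max N 1 with hN'
  have hN'pos : 0 < N' := lt_of_lt_of_le one_pos (le_max_right N 1)
  have hδ' : 0 < δ / N' := by positivity
  obtain ⟨M, hM⟩ := exists_nat_one_div_lt hδ'
  obtain ⟨j, k, hk0, hkM, hjk⟩ := Real.exists_int_int_abs_mul_sub_le θ (Nat.succ_pos M)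
  set kn : ℕ := k.toNat with hkn
  have hkpos : 0 < kn := by omega
  refine ⟨N' * kn, ?_, N' * j, ?_⟩
  · calc N ≤ N' := le_max_left N 1
      _ = N' * 1 := (mul_one _).symm
      _ ≤ N' * kn := Nat.mul_le_mul_left _ hkpos
  · have hcast : ((N' * kn : ℕ) : ℝ) * θ - ((N' * j : ℤ) : ℝ)
        = (N' : ℝ) * ((k : ℝ) * θ - j) := by
      push_cast
      rw [show ((kn:ℝ)) = (k:ℝ) by rw [hkn]; exact_mod_cast Int.toNat_of_nonneg hk0.le]
      ring
    rw [hcast, abs_mul, abs_of_nonneg (by positivity : (0:ℝ) ≤ (N':ℝ))]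
    have h1 : |(k : ℝ) * θ - j| < δ / N' := lt_of_le_of_lt (le_trans hjk (by
      rw [div_le_div_iff₀ (by positivity) (by positivity)]
      push_cast; nlinarith [hjk])) hM
    calc (N' : ℝ) * |(k : ℝ) * θ - j| < (N' : ℝ) * (δ / N') := by
          exact mul_lt_mul_of_pos_left h1 (by exact_mod_cast hN'pos)
      _ = δ := by field_simp

lemma dist_iter_le (a b : ℝ) (n : ℕ) :
    dist (mapF^[n] (ptC a)) (mapF^[n] (ptC b)) ≤
      |Real.exp (a+n) / (1 + Real.exp (a+n)) - Real.exp (b+n) / (1 + Real.exp (b+n))|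
        + ‖EC ((n:ℝ)*a) - EC ((n:ℝ)*b)‖ := by
  rw [iterF, iterF, Complex.dist_eq]
  have hdecomp : ptC (a+n) * EC ((n:ℝ)*a) - ptC (b+n) * EC ((n:ℝ)*b)
      = ((Real.exp (a+n) / (1 + Real.exp (a+n)) - Real.exp (b+n) / (1 + Real.exp (b+n)) : ℝ) : ℂ)
          * EC ((n:ℝ)*a)
        + ((Real.exp (b+n) / (1 + Real.exp (b+n)) : ℝ):ℂ) * (EC ((n:ℝ)*a) - EC ((n:ℝ)*b)) := by
    rw [ptC, ptC, Complex.ofReal_sub]; ring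
  rw [hdecomp]
  refine le_trans (norm_add_le _ _) ?_
  gcongr
  · rw [norm_mul, EC_abs, mul_one, Complex.norm_real, Real.norm_eq_abs]
  · rw [norm_mul, Complex.norm_real, Real.norm_eq_abs, abs_of_pos (ptR_pos (b+n))]
    nlinarith [ptR_lt_one (b+n), ptR_pos (b+n),
      norm_nonneg (EC ((n:ℝ)*a) - EC ((n:ℝ)*b))]

lemma EC_diff_small {s : ℝ} (hs : |2 * Real.pi * s| ≤ 1) :
    ‖EC s - 1‖ ≤ 2 * |2 * Real.pi * s| := by
  have h := Complex.norm_exp_sub_one_le (x := 2 * Real.pi * Complex.I * (s:ℝ)) (by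
    rw [show (2 * Real.pi * Complex.I * (s:ℝ)) = ((2*Real.pi*s : ℝ):ℂ) * Complex.I by push_cast; ring]
    rw [norm_mul, Complex.norm_I, mul_one, Complex.norm_real, Real.norm_eq_abs]
    exact hs)
  rw [EC]
  refine le_trans h ?_
  rw [show (2 * Real.pi * Complex.I * (s:ℝ)) = ((2*Real.pi*s : ℝ):ℂ) * Complex.I by push_cast; ring]
  rw [norm_mul, Complex.norm_I, mul_one, Complex.norm_real, Real.norm_eq_abs]

lemma rho_diff_tendsto (a b : ℝ) :
    Tendsto (fun n : ℕ => |Real.exp (a+n) / (1 + Real.exp (a+n))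
      - Real.exp (b+n) / (1 + Real.exp (b+n))|) atTop (𝓝 0) := by
  have h := (tendsto_rho a).sub (tendsto_rho b)
  rw [sub_self] at h
  simpa using h.abs

lemma liminf_zero {a b : ℝ} :
    Filter.liminf (fun n : ℕ => edist (mapF^[n] (ptC a)) (mapF^[n] (ptC b))) Filter.atTop = 0 := by
  refine le_antisymm ?_ (by simp)
  have key : ∀ ε : ℝ, 0 < ε → ∃ᶠ n in atTop,
      edist (mapF^[n] (ptC a)) (mapF^[n] (ptC b)) ≤ ENNReal.ofReal ε := by
    intro ε hε
    rw [frequently_atTop]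
    intro N
    -- eventually the radius difference is small
    have hev := (rho_diff_tendsto a b).eventually (eventually_lt_nhds (show (0:ℝ) < ε/2 by linarith))
    rw [eventually_atTop] at hev
    obtain ⟨N₀, hN₀⟩ := hev
    have hπ := Real.pi_pos
    set δ : ℝ := min (ε/(8*Real.pi)) (1/(4*Real.pi)) with hδdef
    have hδ : 0 < δ := by
      apply lt_min <;> positivity
    obtain ⟨n, hn, m, hm⟩ := near_int (a - b) hδ (max N N₀)
    refine ⟨n, le_trans (le_max_left N N₀) hn, ?_⟩
    have hECeq : EC ((n:ℝ)*a) - EC ((n:ℝ)*b) = EC ((n:ℝ)*b) * (EC ((n:ℝ)*(a-b) - m) - 1) := by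
      have h1 : EC ((n:ℝ)*a) = EC ((n:ℝ)*b) * EC ((n:ℝ)*(a-b) - m) := by
        rw [show ((n:ℝ)*(a-b) - m) = ((n:ℝ)*(a-b) - m) from rfl, ← mul_one (EC ((n:ℝ)*b) * _),
          ← EC_int m, ← EC_add, ← EC_add]
        ring_nf
      rw [h1]; ring
    have hsmall : ‖EC ((n:ℝ)*a) - EC ((n:ℝ)*b)‖ ≤ ε/2 := by
      rw [hECeq, norm_mul, EC_abs, one_mul]
      have habs : |2 * Real.pi * ((n:ℝ)*(a-b) - m)| ≤ 2 * Real.pi * δ := by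
        rw [abs_mul, abs_of_pos (by positivity : (0:ℝ) < 2*Real.pi)]
        exact mul_le_mul_of_nonneg_left hm.le (by positivity)
      have h2πδ : 2 * Real.pi * δ ≤ 1/2 := by
        have : δ ≤ 1/(4*Real.pi) := min_le_right _ _
        calc 2 * Real.pi * δ ≤ 2 * Real.pi * (1/(4*Real.pi)) := by
              exact mul_le_mul_of_nonneg_left this (by positivity)
          _ = 1/2 := by field_simp; ring
      refine le_trans (EC_diff_small (le_trans habs (by linarith))) ?_
      have hδε : δ ≤ ε/(8*Real.pi) := min_le_left _ _
      calc 2 * |2 * Real.pi * ((n:ℝ)*(a-b) - m)| ≤ 2 * (2 * Real.pi * δ) := by linarith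
        _ ≤ 2 * (2 * Real.pi * (ε/(8*Real.pi))) := by
            refine mul_le_mul_of_nonneg_left (mul_le_mul_of_nonneg_left hδε (by positivity)) (by norm_num)
        _ = ε/2 := by field_simp; ring
    have hdist : dist (mapF^[n] (ptC a)) (mapF^[n] (ptC b)) ≤ ε := by
      refine le_trans (dist_iter_le a b n) ?_
      have := hN₀ n (le_trans (le_max_right N N₀) hn)
      linarith
    rw [edist_dist]
    exact ENNReal.ofReal_le_ofReal hdist
  refine ENNReal.le_of_forall_pos_le_add fun ε hε _ => ?_
  rw [zero_add]
  calc Filter.liminf (fun n : ℕ => edist (mapF^[n] (ptC a)) (mapF^[n] (ptC b))) Filter.atTop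
      ≤ ENNReal.ofReal (ε:ℝ) := Filter.liminf_le_of_frequently_le' (key ε (by exact_mod_cast hε))
    _ ≤ (ε : ENNReal) := by rw [ENNReal.ofReal_coe_nnreal]

lemma limsup_pos {a b : ℝ} (hab : Irrational (a - b)) :
    0 < Filter.limsup (fun n : ℕ => edist (mapF^[n] (ptC a)) (mapF^[n] (ptC b))) Filter.atTop := by
  rw [pos_iff_ne_zero]
  intro h0
  -- edist tends to 0
  have htend : Tendsto (fun n : ℕ => edist (mapF^[n] (ptC a)) (mapF^[n] (ptC b))) atTop (𝓝 0) :=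
    tendsto_of_liminf_eq_limsup liminf_zero h0
  have hdist : Tendsto (fun n : ℕ => dist (mapF^[n] (ptC a)) (mapF^[n] (ptC b))) atTop (𝓝 0) := by
    have := (ENNReal.tendsto_toReal (by norm_num : (0:ENNReal) ≠ ⊤)).comp htend
    simpa [dist_edist, Function.comp_def] using this
  -- hence the difference tends to 0
  have hsub : Tendsto (fun n : ℕ => mapF^[n] (ptC a) - mapF^[n] (ptC b)) atTop (𝓝 0) := by
    rw [tendsto_zero_iff_norm_tendsto_zero]
    simpa [dist_eq_norm] using hdist
  set u : ℕ → ℂ := fun n => EC ((n:ℝ)*a) with hu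
  set v : ℕ → ℂ := fun n => EC ((n:ℝ)*b) with hv
  -- (1-ρ n) u n → 0
  have haux : ∀ c : ℝ, Tendsto (fun n : ℕ =>
      ((1 - Real.exp (c+n) / (1 + Real.exp (c+n)) : ℝ):ℂ) * EC ((n:ℝ)*c)) atTop (𝓝 0) := by
    intro c
    apply squeeze_zero_norm (a := fun n : ℕ => |1 - Real.exp (c+n) / (1 + Real.exp (c+n))|)
    · intro n
      rw [norm_mul, EC_abs, mul_one,
        Complex.norm_real, Real.norm_eq_abs]
    · have h := (tendsto_const_nhds (x := (1:ℝ))).sub (tendsto_rho c)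
      rw [sub_self] at h
      simpa using h.abs
  -- u - v → 0
  have huv : Tendsto (fun n : ℕ => u n - v n) atTop (𝓝 0) := by
    have hsum := (hsub.add (haux a)).sub (haux b)
    rw [show ((0:ℂ) + 0 - 0) = 0 by ring] at hsum
    refine hsum.congr fun n => ?_
    rw [iterF, iterF, ptC, ptC, hu, hv]
    push_cast
    ring
  -- shifted sequence
  have huv' : Tendsto (fun n : ℕ => u (n+1) - v (n+1)) atTop (𝓝 0) :=
    huv.comp (tendsto_add_atTop_nat 1)
  have hshift : ∀ n : ℕ, u (n+1) = EC a * u n ∧ v (n+1) = EC b * v n := by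
    intro n
    constructor
    · show EC (((n+1:ℕ):ℝ) * a) = EC a * EC ((n:ℝ)*a)
      rw [show ((n+1:ℕ):ℝ) * a = (n:ℝ)*a + a by push_cast; ring, EC_add]; ring
    · show EC (((n+1:ℕ):ℝ) * b) = EC b * EC ((n:ℝ)*b)
      rw [show ((n+1:ℕ):ℝ) * b = (n:ℝ)*b + b by push_cast; ring, EC_add]; ring
  have hconst : Tendsto (fun n : ℕ => (EC a - EC b) * v n) atTop (𝓝 0) := by
    have h1 : Tendsto (fun n : ℕ => (u (n+1) - v (n+1)) - EC a * (u n - v n)) atTop (𝓝 0) := by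
      have := huv'.sub (huv.const_mul (EC a))
      simpa using this
    refine h1.congr fun n => ?_
    rw [(hshift n).1, (hshift n).2]
    ring
  have hnorm : Tendsto (fun n : ℕ => ‖(EC a - EC b) * v n‖) atTop (𝓝 0) := by
    simpa using hconst.norm
  have hnconst : (fun n : ℕ => ‖(EC a - EC b) * v n‖) = fun _ => ‖EC a - EC b‖ := by
    funext n
    rw [norm_mul, hv, EC_abs, mul_one]
  rw [hnconst] at hnorm
  have heq0 : ‖EC a - EC b‖ = 0 :=
    tendsto_nhds_unique tendsto_const_nhds hnorm
  have hECab : EC a = EC b := by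
    rwa [norm_eq_zero, sub_eq_zero] at heq0
  -- derive contradiction with irrationality
  have hECθ : EC (a - b) = 1 := by
    have h1 : EC b * EC (a - b) = EC b * 1 := by
      rw [mul_one, ← EC_add, show b + (a-b) = a by ring, hECab]
    exact mul_left_cancel₀ (EC_ne_zero b) h1
  rw [EC] at hECθ
  rw [Complex.exp_eq_one_iff] at hECθ
  obtain ⟨m, hm⟩ := hECθ
  have h2πI : (2 * (Real.pi:ℂ) * Complex.I) ≠ 0 := by
    simp [Real.pi_ne_zero, Complex.I_ne_zero, Complex.ofReal_ne_zero]
  have : ((a - b : ℝ):ℂ) = (m:ℂ) := by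
    apply mul_left_cancel₀ h2πI
    rw [hm]; ring
  exact hab.ne_int m (by exact_mod_cast this)

/-- The subgroup of rationals in ℝ. -/
noncomputable def Qsub : AddSubgroup ℝ :=
  AddMonoidHom.range ((Rat.castHom ℝ).toAddMonoidHom)

lemma mem_Qsub {x : ℝ} : x ∈ Qsub ↔ ∃ q : ℚ, (q : ℝ) = x := Iff.rfl

lemma out_mk_eq (q : ℝ ⧸ Qsub) : (QuotientAddGroup.mk q.out : ℝ ⧸ Qsub) = q :=
  Quotient.out_eq' q

lemma irrational_out_sub {q1 q2 : ℝ ⧸ Qsub} (h : q1 ≠ q2) :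
    Irrational (q1.out - q2.out) := by
  intro ⟨r, hr⟩
  apply h
  rw [← out_mk_eq q1, ← out_mk_eq q2, QuotientAddGroup.eq]
  rw [mem_Qsub]
  exact ⟨-r, by push_cast; linarith⟩

lemma rat_diff_out (x : ℝ) :
    ∃ q : ℚ, (q : ℝ) = x - (QuotientAddGroup.mk x : ℝ ⧸ Qsub).out := by
  have h := out_mk_eq (QuotientAddGroup.mk x : ℝ ⧸ Qsub)
  rw [QuotientAddGroup.eq, mem_Qsub] at h
  obtain ⟨q, hq⟩ := h
  exact ⟨q, by linarith⟩

lemma not_countable_out : ¬ (Set.range (fun q : ℝ ⧸ Qsub => q.out)).Countable := by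
  intro hc
  have hcq : Countable (ℝ ⧸ Qsub) := by
    have := hc.to_subtype
    exact Countable.of_equiv _ (Equiv.ofInjective _ Quotient.out_injective).symm
  have hinj : Function.Injective (fun x : ℝ =>
      ((QuotientAddGroup.mk x : ℝ ⧸ Qsub),
        Function.invFun (Rat.cast : ℚ → ℝ) (x - (QuotientAddGroup.mk x : ℝ ⧸ Qsub).out))) := by
    intro x y hxy
    simp only [Prod.mk.injEq] at hxy
    obtain ⟨h1, h2⟩ := hxy
    have ex := Function.invFun_eq (f := (Rat.cast : ℚ → ℝ)) (rat_diff_out x)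
    have ey := Function.invFun_eq (f := (Rat.cast : ℚ → ℝ)) (rat_diff_out y)
    rw [h2, h1] at ex
    rw [ex] at ey
    linarith [ey]
  have : Countable ℝ := hinj.countable
  exact Cardinal.not_countable_real Set.countable_univ

lemma ptC_injective : Function.Injective ptC := by
  intro a b h
  rw [ptC, ptC] at h
  have h' : Real.exp a / (1 + Real.exp a) = Real.exp b / (1 + Real.exp b) := by
    exact_mod_cast h
  have ha := (one_add_exp_pos a).ne'
  have hb := (one_add_exp_pos b).ne'
  field_simp at h'
  have : Real.exp a = Real.exp b := by nlinarith
  exact Real.exp_injective this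

/-- The map `f` of the open unit disk is Li-Yorke chaotic: there is an uncountable subset of
the disk all of whose pairs of distinct points are Li-Yorke chaotic pairs for `f`. -/
theorem stmt_18 :
    ∃ Γ : Set ℂ, Γ ⊆ unitDisk ∧ ¬ Γ.Countable ∧
      ∀ x ∈ Γ, ∀ y ∈ Γ, x ≠ y → LiYorkePair mapF x y := by
  refine ⟨ptC '' (Set.range (fun q : ℝ ⧸ Qsub => q.out)), ?_, ?_, ?_⟩
  · rintro z ⟨a, -, rfl⟩
    show ‖ptC a‖ < 1
    rw [ptC, Complex.norm_real, Real.norm_eq_abs, abs_of_pos (ptR_pos a)]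
    exact ptR_lt_one a
  · intro hc
    exact not_countable_out (hc.preimage ptC_injective |>.mono (Set.subset_preimage_image _ _))
  · rintro x ⟨a, ⟨q1, rfl⟩, rfl⟩ y ⟨b, ⟨q2, rfl⟩, rfl⟩ hxy
    have hq : q1 ≠ q2 := by
      rintro rfl
      exact hxy rfl
    exact ⟨limsup_pos (irrational_out_sub hq), liminf_zero⟩
end
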